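/- If (G, k) is a yes-instance of Cluster Editing with Vertex Splitting, then the critical clique graph CC(G) has at most 4k non-isolated vertices, every connected component of CC(G) has at most 3k+1 vertices, and CC(G) has at most k connected components that are not isolated vertices. -/

import Mathlib

open scoped Classical

/-- The cluster graph determined by a covering `C` of the vertex set: two distinct
vertices are adjacent iff they lie in a common set of `C`. -/
def clusterGraphOf {V : Type*} (C : Finset (Finset V)) : SimpleGraph V :=
  SimpleGraph.fromRel (fun u v => ∃ S ∈ C, u ∈ S ∧ v ∈ S)

/-- The number of vertex splittings needed to realize the covering `C`: a vertex
occurring in `m` clusters must be split `m - 1` times. -/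
noncomputable def splitCost {V : Type*} [Fintype V] (C : Finset (Finset V)) : ℕ :=
  ∑ v : V, ((C.filter (fun S => v ∈ S)).card - 1)

/-- The number of edges on which two graphs differ. -/
noncomputable def editDiff {V : Type*} [Fintype V] (G H : SimpleGraph V) : ℕ :=
  (Finset.univ.filter (fun e : Sym2 V =>
    (e ∈ G.edgeSet ∧ e ∉ H.edgeSet) ∨ (e ∉ G.edgeSet ∧ e ∈ H.edgeSet))).card

/-- The minimum number of edit operations (edge additions, edge deletions and
inclusive vertex splits) of a solution of CEVS represented by the covering `C`. -/
noncomputable def cevsCost {V : Type*} [Fintype V] (G : SimpleGraph V)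
    (C : Finset (Finset V)) : ℕ :=
  splitCost C + editDiff G (clusterGraphOf C)

/-- `C` is a covering of the vertex set. -/
def IsCovering {V : Type*} (C : Finset (Finset V)) : Prop :=
  ∀ v : V, ∃ S ∈ C, v ∈ S

/-- `(G, k)` is a yes-instance of Cluster Editing with Vertex Splitting: some
covering of the vertex set (representing the clusters of the final cluster graph,
each set being the original vertices corresponding to one final clique) has edit
cost at most `k`. -/
noncomputable def CEVS {V : Type*} [Fintype V] (G : SimpleGraph V) (k : ℕ) : Prop :=
  ∃ C : Finset (Finset V), IsCovering C ∧ cevsCost G C ≤ k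

/-- `C` is an optimal solution of CEVS on `G`: a covering of minimum edit cost. -/
noncomputable def IsOptimalSolution {V : Type*} [Fintype V] (G : SimpleGraph V)
    (C : Finset (Finset V)) : Prop :=
  IsCovering C ∧ ∀ C' : Finset (Finset V), IsCovering C' → cevsCost G C ≤ cevsCost G C'

/-- Vertices with equal closed neighborhoods; the equivalence classes are the
critical cliques of `G`. -/
def ccSetoid {V : Type*} (G : SimpleGraph V) : Setoid V :=
  ⟨fun u v => insert u (G.neighborSet u) = insert v (G.neighborSet v),
    fun _ => rfl, Eq.symm, Eq.trans⟩

/-- The critical clique graph `CC(G)`: its vertices are the critical cliques of `G`,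
two being adjacent iff some (equivalently, every) pair of representatives is
adjacent in `G`. -/
def ccGraph {V : Type*} (G : SimpleGraph V) : SimpleGraph (Quotient (ccSetoid G)) :=
  SimpleGraph.fromRel (fun a b =>
    ∃ u v : V, Quotient.mk (ccSetoid G) u = a ∧ Quotient.mk (ccSetoid G) v = b ∧ G.Adj u v)

set_option linter.unusedSectionVars false

section AuxLemmas
variable {V : Type*} [Fintype V]

/-- The set of edited edges. -/
noncomputable def ESet (G : SimpleGraph V) (C : Finset (Finset V)) : Finset (Sym2 V) :=
  Finset.univ.filter (fun e : Sym2 V =>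
    (e ∈ G.edgeSet ∧ e ∉ (clusterGraphOf C).edgeSet) ∨
    (e ∉ G.edgeSet ∧ e ∈ (clusterGraphOf C).edgeSet))

/-- A vertex untouched by the solution: not split, and no incident edge edited. -/
def Untouched (G : SimpleGraph V) (C : Finset (Finset V)) (v : V) : Prop :=
  (C.filter (fun S => v ∈ S)).card ≤ 1 ∧ ∀ w, s(v, w) ∉ ESet G C

/-- The (a) cluster containing `v`. -/
noncomputable def cluOf {V : Type*} (C : Finset (Finset V)) (v : V) : Finset V :=
  if h : (C.filter (fun S => v ∈ S)).Nonempty then h.choose else ∅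

lemma cluOf_mem {C : Finset (Finset V)} (hcov : IsCovering C) (v : V) :
    cluOf C v ∈ C ∧ v ∈ cluOf C v := by
  obtain ⟨S, hS, hvS⟩ := hcov v
  have hne : (C.filter (fun S => v ∈ S)).Nonempty := ⟨S, by simp [hS, hvS]⟩
  have := hne.choose_spec
  rw [Finset.mem_filter] at this
  rw [cluOf, dif_pos hne]
  exact this

lemma cluOf_unique {C : Finset (Finset V)} {v : V}
    (h1 : (C.filter (fun S => v ∈ S)).card ≤ 1) {T : Finset V} (hT : T ∈ C) (hvT : v ∈ T) :
    T = cluOf C v := by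
  have hne : (C.filter (fun S => v ∈ S)).Nonempty := ⟨T, by simp [hT, hvT]⟩
  have h2 := hne.choose_spec
  rw [cluOf, dif_pos hne]
  exact Finset.card_le_one.mp h1 T (by simp [hT, hvT]) _ h2

lemma adj_clusterGraphOf {C : Finset (Finset V)} {u v : V} :
    (clusterGraphOf C).Adj u v ↔ u ≠ v ∧ ∃ S ∈ C, u ∈ S ∧ v ∈ S := by
  rw [clusterGraphOf, SimpleGraph.fromRel_adj]
  constructor
  · rintro ⟨hne, ⟨S, hS, h1, h2⟩ | ⟨S, hS, h1, h2⟩⟩ <;> exact ⟨hne, S, hS, by tauto⟩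
  · rintro ⟨hne, S, hS, h1, h2⟩
    exact ⟨hne, Or.inl ⟨S, hS, h1, h2⟩⟩

lemma adj_iff_of_not_edited {G : SimpleGraph V} {C : Finset (Finset V)} {u v : V}
    (h : s(u, v) ∉ ESet G C) : (G.Adj u v ↔ (clusterGraphOf C).Adj u v) := by
  rw [ESet, Finset.mem_filter] at h
  push_neg at h
  have := h (Finset.mem_univ _)
  rw [← SimpleGraph.mem_edgeSet, ← SimpleGraph.mem_edgeSet (G := clusterGraphOf C)]
  tauto

/-- Closed neighborhood of an untouched vertex is its unique cluster. -/
lemma mem_cluOf_iff {G : SimpleGraph V} {C : Finset (Finset V)}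
    (hcov : IsCovering C) {v : V} (hv : Untouched G C v) (w : V) :
    (w = v ∨ G.Adj v w) ↔ w ∈ cluOf C v := by
  obtain ⟨hmemC, hvm⟩ := cluOf_mem hcov v
  constructor
  · rintro (rfl | hadj)
    · exact hvm
    · have hH := (adj_iff_of_not_edited (hv.2 w)).mp hadj
      obtain ⟨hne, S, hS, h1, h2⟩ := adj_clusterGraphOf.mp hH
      rw [cluOf_unique hv.1 hS h1] at h2
      exact h2
  · intro hw
    rcases eq_or_ne w v with rfl | hne
    · exact Or.inl rfl
    · refine Or.inr ?_
      refine (adj_iff_of_not_edited (hv.2 w)).mpr ?_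
      exact adj_clusterGraphOf.mpr ⟨hne.symm, cluOf C v, hmemC, hvm, hw⟩

lemma closed_eq_cluOf {G : SimpleGraph V} {C : Finset (Finset V)}
    (hcov : IsCovering C) {v : V} (hv : Untouched G C v) :
    (insert v (G.neighborSet v) : Set V) = ↑(cluOf C v) := by
  ext w
  rw [Set.mem_insert_iff, SimpleGraph.mem_neighborSet, Finset.mem_coe]
  exact mem_cluOf_iff hcov hv w

lemma mk_eq_of_cluOf_eq {G : SimpleGraph V} {C : Finset (Finset V)}
    (hcov : IsCovering C) {u v : V} (hu : Untouched G C u) (hv : Untouched G C v)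
    (h : cluOf C u = cluOf C v) :
    Quotient.mk (ccSetoid G) u = Quotient.mk (ccSetoid G) v := by
  refine Quotient.sound ?_
  show insert u (G.neighborSet u) = insert v (G.neighborSet v)
  rw [closed_eq_cluOf hcov hu, closed_eq_cluOf hcov hv, h]

lemma cluOf_eq_of_mk_eq {G : SimpleGraph V} {C : Finset (Finset V)}
    (hcov : IsCovering C) {u v : V} (hu : Untouched G C u) (hv : Untouched G C v)
    (h : Quotient.mk (ccSetoid G) u = Quotient.mk (ccSetoid G) v) :
    cluOf C u = cluOf C v := by
  have hrel : insert u (G.neighborSet u) = insert v (G.neighborSet v) := Quotient.exact h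
  have := (closed_eq_cluOf hcov hu).symm.trans (hrel.trans (closed_eq_cluOf hcov hv))
  exact_mod_cast Finset.coe_injective this

lemma ccAdj_iff {G : SimpleGraph V} {a b : Quotient (ccSetoid G)} :
    (ccGraph G).Adj a b ↔ a ≠ b ∧ ∃ u v : V, Quotient.mk (ccSetoid G) u = a ∧
      Quotient.mk (ccSetoid G) v = b ∧ G.Adj u v := by
  rw [ccGraph, SimpleGraph.fromRel_adj]
  constructor
  · rintro ⟨hne, ⟨u, v, h1, h2, h3⟩ | ⟨u, v, h1, h2, h3⟩⟩
    · exact ⟨hne, u, v, h1, h2, h3⟩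
    · exact ⟨hne, v, u, h2, h1, h3.symm⟩
  · rintro ⟨hne, u, v, h1, h2, h3⟩
    exact ⟨hne, Or.inl ⟨u, v, h1, h2, h3⟩⟩

lemma mem_closed_iff {G : SimpleGraph V} {u w : V} :
    w ∈ insert u (G.neighborSet u) ↔ (w = u ∨ G.Adj u w) := by
  simp [SimpleGraph.mem_neighborSet]

lemma compMk_eq_of_adj {G : SimpleGraph V} {u v : V} (h : G.Adj u v) :
    (ccGraph G).connectedComponentMk (Quotient.mk (ccSetoid G) u) =
      (ccGraph G).connectedComponentMk (Quotient.mk (ccSetoid G) v) := by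
  rcases eq_or_ne (Quotient.mk (ccSetoid G) u) (Quotient.mk (ccSetoid G) v) with he | hne
  · rw [he]
  · exact SimpleGraph.ConnectedComponent.sound <| SimpleGraph.Adj.reachable
      (ccAdj_iff.mpr ⟨hne, u, v, rfl, rfl, h⟩)

lemma eq_or_adj_of_mk_eq {G : SimpleGraph V} {u v : V}
    (h : Quotient.mk (ccSetoid G) u = Quotient.mk (ccSetoid G) v) : u = v ∨ G.Adj u v := by
  have hrel : insert u (G.neighborSet u) = insert v (G.neighborSet v) := Quotient.exact h
  have : v ∈ insert u (G.neighborSet u) := by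
    rw [hrel]; exact Set.mem_insert _ _
  rw [mem_closed_iff] at this
  tauto

lemma rtg_of_mk_eq {G : SimpleGraph V} {u v : V}
    (h : Quotient.mk (ccSetoid G) u = Quotient.mk (ccSetoid G) v) :
    Relation.ReflTransGen G.Adj u v := by
  rcases eq_or_adj_of_mk_eq h with rfl | h
  · rfl
  · exact Relation.ReflTransGen.single h

lemma rtg_of_comp_eq {G : SimpleGraph V} {u v : V}
    (h : (ccGraph G).connectedComponentMk (Quotient.mk (ccSetoid G) u) =
      (ccGraph G).connectedComponentMk (Quotient.mk (ccSetoid G) v)) :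
    Relation.ReflTransGen G.Adj u v := by
  have hre : (ccGraph G).Reachable (Quotient.mk (ccSetoid G) u) (Quotient.mk (ccSetoid G) v) :=
    SimpleGraph.ConnectedComponent.exact h
  rw [SimpleGraph.reachable_iff_reflTransGen] at hre
  have key : ∀ a b : Quotient (ccSetoid G), Relation.ReflTransGen (ccGraph G).Adj a b →
      ∀ x y : V, Quotient.mk (ccSetoid G) x = a → Quotient.mk (ccSetoid G) y = b →
      Relation.ReflTransGen G.Adj x y := by
    intro a b hab
    induction hab with
    | refl =>
      intro x y hx hy
      exact rtg_of_mk_eq (hx.trans hy.symm)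
    | tail h1 h2 ih =>
      intro x y hx hy
      obtain ⟨hne, p, q, hp, hq, hpq⟩ := ccAdj_iff.mp h2
      have h3 := ih x p hx hp
      have h4 : Relation.ReflTransGen G.Adj q y := rtg_of_mk_eq (hq.trans hy.symm)
      exact (h3.tail hpq).trans h4
  exact key _ _ hre u v rfl rfl

lemma conn_card_le_edges {α : Type*} [Fintype α] (Γ : SimpleGraph α) (h : Γ.Connected) :
    Fintype.card α ≤ Γ.edgeFinset.card + 1 := by
  obtain ⟨x0⟩ := h.nonempty
  have key : ∀ v : α, v ≠ x0 → ∃ u, Γ.Adj u v ∧ Γ.dist x0 u + 1 = Γ.dist x0 v := by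
    intro v hv
    have hr : Γ.Reachable x0 v := h.preconnected x0 v
    obtain ⟨p, hp⟩ := hr.exists_walk_length_eq_dist
    obtain ⟨w, hadj, q, hq⟩ := SimpleGraph.Walk.exists_eq_cons_of_ne hv p.reverse
    have hlen : p.length = q.length + 1 := by
      have := congrArg SimpleGraph.Walk.length hq
      rwa [SimpleGraph.Walk.length_reverse, SimpleGraph.Walk.length_cons] at this
    have h1 : Γ.dist x0 w ≤ q.length := by
      simpa [SimpleGraph.Walk.length_reverse] using Γ.dist_le q.reverse
    have h2 : Γ.dist x0 v ≤ Γ.dist x0 w + 1 := by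
      calc Γ.dist x0 v ≤ Γ.dist x0 w + Γ.dist w v := h.dist_triangle
        _ ≤ Γ.dist x0 w + 1 := by
            have : Γ.dist w v ≤ 1 := by
              simpa using Γ.dist_le (SimpleGraph.Walk.cons hadj.symm SimpleGraph.Walk.nil)
            omega
    refine ⟨w, hadj.symm, ?_⟩
    omega
  have hcard : (Finset.univ.erase x0).card ≤ Γ.edgeFinset.card := by
    apply Finset.card_le_card_of_injOn
      (fun v => if hv : v ≠ x0 then s((key v hv).choose, v) else s(x0, x0))
    · intro v hvmem
      have hv : v ≠ x0 := (Finset.mem_erase.mp hvmem).1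
      simp only [dif_pos hv]
      rw [Finset.mem_coe, SimpleGraph.mem_edgeFinset, SimpleGraph.mem_edgeSet]
      exact (key v hv).choose_spec.1
    · intro v hvmem v' hvmem' heq
      have hv : v ≠ x0 := (Finset.mem_erase.mp hvmem).1
      have hv' : v' ≠ x0 := (Finset.mem_erase.mp hvmem').1
      simp only [dif_pos hv, dif_pos hv'] at heq
      rw [Sym2.eq_iff] at heq
      rcases heq with ⟨_, h2⟩ | ⟨h1, h2⟩
      · exact h2
      · exfalso
        have e1 := (key v hv).choose_spec.2
        have e2 := (key v' hv').choose_spec.2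
        rw [h1] at e1; rw [← h2] at e2
        omega
  have : 0 < Fintype.card α := Fintype.card_pos_iff.mpr ⟨x0⟩
  rw [Finset.card_erase_of_mem (Finset.mem_univ _), Finset.card_univ] at hcard
  omega

/-- Counting touched vertices within a vertex set `Wf`. -/
lemma touched_card {G : SimpleGraph V} {C : Finset (Finset V)} (Wf : Finset V)
    (EF : Finset (Sym2 V)) (hEF : ∀ e ∈ ESet G C, (∃ v ∈ Wf, v ∈ e) → e ∈ EF) :
    (Wf.filter (fun v => ¬ Untouched G C v)).card ≤
      (∑ v ∈ Wf, ((C.filter (fun S => v ∈ S)).card - 1)) + 2 * EF.card := by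
  set A := Wf.filter (fun v => 2 ≤ (C.filter (fun S => v ∈ S)).card) with hA
  set B := EF.biUnion (fun e => Finset.univ.filter (· ∈ e)) with hB
  have hsub : Wf.filter (fun v => ¬ Untouched G C v) ⊆ A ∪ B := by
    intro v hv
    rw [Finset.mem_filter] at hv
    obtain ⟨hvW, hvt⟩ := hv
    rw [Untouched, not_and_or] at hvt
    rcases hvt with h1 | h2
    · exact Finset.mem_union_left _ (Finset.mem_filter.mpr ⟨hvW, by omega⟩)
    · push_neg at h2
      obtain ⟨w, hw⟩ := h2
      refine Finset.mem_union_right _ (Finset.mem_biUnion.mpr ⟨s(v, w), ?_, ?_⟩)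
      · exact hEF _ hw ⟨v, hvW, Sym2.mem_mk_left _ _⟩
      · simp
  have hAcard : A.card ≤ ∑ v ∈ Wf, ((C.filter (fun S => v ∈ S)).card - 1) := by
    calc A.card = ∑ v ∈ A, 1 := by simp
      _ ≤ ∑ v ∈ A, ((C.filter (fun S => v ∈ S)).card - 1) := by
          apply Finset.sum_le_sum
          intro i hi
          have := (Finset.mem_filter.mp hi).2
          omega
      _ ≤ ∑ v ∈ Wf, ((C.filter (fun S => v ∈ S)).card - 1) :=
          Finset.sum_le_sum_of_subset (Finset.filter_subset _ _)
  have hBcard : B.card ≤ 2 * EF.card := by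
    rw [hB]
    calc _ ≤ ∑ e ∈ EF, (Finset.univ.filter (· ∈ e)).card := Finset.card_biUnion_le
      _ ≤ ∑ _e ∈ EF, 2 := by
          apply Finset.sum_le_sum
          intro e _
          refine Sym2.ind (fun a b => ?_) e
          have : Finset.univ.filter (· ∈ s(a, b)) ⊆ {a, b} := by
            intro x hx
            rw [Finset.mem_filter, Sym2.mem_iff] at hx
            simpa using hx.2
          calc (Finset.univ.filter (· ∈ s(a, b))).card ≤ ({a, b} : Finset V).card :=
              Finset.card_le_card this
            _ ≤ 2 := Finset.card_insert_le _ _ |>.trans (by simp)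
      _ = 2 * _ := by rw [Finset.sum_const, smul_eq_mul, mul_comm]
  calc (Wf.filter (fun v => ¬ Untouched G C v)).card ≤ (A ∪ B).card :=
      Finset.card_le_card hsub
    _ ≤ A.card + B.card := Finset.card_union_le _ _
    _ ≤ _ := by omega

end AuxLemmas

theorem ccGraph_bounds {V : Type*} [Fintype V] (G : SimpleGraph V) (k : ℕ)
    (h : CEVS G k) :
    (Finset.univ.filter (fun a : Quotient (ccSetoid G) =>
        ∃ b, (ccGraph G).Adj a b)).card ≤ 4 * k ∧
    (∀ c : (ccGraph G).ConnectedComponent,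
        (Finset.univ.filter (fun a : Quotient (ccSetoid G) =>
          (ccGraph G).connectedComponentMk a = c)).card ≤ 3 * k + 1) ∧
    (Finset.univ.filter (fun c : (ccGraph G).ConnectedComponent =>
        ∃ a b, (ccGraph G).connectedComponentMk a = c ∧ (ccGraph G).Adj a b)).card
      ≤ k := by
  obtain ⟨C, hcov, hk⟩ := h
  have hek : splitCost C + (ESet G C).card ≤ k := by
    simpa [cevsCost, editDiff, ESet] using hk
  set TV : Finset V := Finset.univ.filter (fun v => ¬ Untouched G C v) with hTVdef
  have hTV : TV.card ≤ splitCost C + 2 * (ESet G C).card := by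
    refine le_trans (touched_card (G := G) (C := C) Finset.univ (ESet G C)
      (fun e he _ => he)) ?_
    have h2 : ∑ v ∈ Finset.univ, ((C.filter (fun S => v ∈ S)).card - 1) ≤ splitCost C := by
      rw [splitCost]
    omega
  refine ⟨?_, ?_, ?_⟩
  · -- Part 1: at most 4k non-isolated critical cliques
    set N1 := Finset.univ.filter (fun a : Quotient (ccSetoid G) =>
      ∃ b, (ccGraph G).Adj a b) with hN1
    set TC := C.filter (fun S => ∃ v ∈ S, ¬ Untouched G C v) with hTC
    have hsplit : N1 =
        N1.filter (fun a => ∃ u, Quotient.mk (ccSetoid G) u = a ∧ ¬ Untouched G C u) ∪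
        N1.filter (fun a => ¬ ∃ u, Quotient.mk (ccSetoid G) u = a ∧ ¬ Untouched G C u) :=
      (Finset.filter_union_filter_not_eq _ _).symm
    have hc1 : (N1.filter (fun a => ∃ u, Quotient.mk (ccSetoid G) u = a ∧
        ¬ Untouched G C u)).card ≤ TV.card := by
      refine le_trans (Finset.card_le_card ?_) (Finset.card_image_le (s := TV)
        (f := Quotient.mk (ccSetoid G)))
      intro a ha
      obtain ⟨-, u, hu, hut⟩ := Finset.mem_filter.mp ha
      exact Finset.mem_image.mpr ⟨u, Finset.mem_filter.mpr ⟨Finset.mem_univ _, hut⟩, hu⟩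
    have hc2 : (N1.filter (fun a => ¬ ∃ u, Quotient.mk (ccSetoid G) u = a ∧
        ¬ Untouched G C u)).card ≤ TC.card := by
      apply Finset.card_le_card_of_injOn (fun a => cluOf C (Quotient.out a))
      · intro a ha
        rw [Finset.mem_coe, Finset.mem_filter] at ha
        obtain ⟨haN, haU⟩ := ha
        push_neg at haU
        obtain ⟨-, b, hb⟩ := Finset.mem_filter.mp haN
        obtain ⟨hne, u, v, hu, hv, hadj⟩ := ccAdj_iff.mp hb
        have huU : Untouched G C u := haU u hu
        have houU : Untouched G C (Quotient.out a) := haU _ (Quotient.out_eq a)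
        have hvt : ¬ Untouched G C v := by
          intro hvU
          have hvS : v ∈ cluOf C u := (mem_cluOf_iff hcov huU v).mp (Or.inr hadj)
          have hcc : cluOf C u = cluOf C v :=
            cluOf_unique hvU.1 (cluOf_mem hcov u).1 hvS
          have := mk_eq_of_cluOf_eq hcov huU hvU hcc
          rw [hu, hv] at this
          exact hne this
        have hco : cluOf C (Quotient.out a) = cluOf C u :=
          cluOf_eq_of_mk_eq hcov houU huU ((Quotient.out_eq a).trans hu.symm)
        dsimp only
        rw [hTC, Finset.mem_coe, Finset.mem_filter, hco]
        refine ⟨(cluOf_mem hcov u).1, v, ?_, hvt⟩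
        exact (mem_cluOf_iff hcov huU v).mp (Or.inr hadj)
      · intro a ha a' ha' heq
        have haU := (Finset.mem_filter.mp ha).2
        have haU' := (Finset.mem_filter.mp ha').2
        push_neg at haU haU'
        have := mk_eq_of_cluOf_eq hcov (haU _ (Quotient.out_eq a))
          (haU' _ (Quotient.out_eq a')) heq
        rwa [Quotient.out_eq, Quotient.out_eq] at this
    have hTCcard : TC.card ≤ splitCost C + TV.card := by
      have hsub : TC ⊆ TV.biUnion (fun v => C.filter (fun S => v ∈ S)) := by
        intro S hS
        rw [hTC, Finset.mem_filter] at hS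
        obtain ⟨hSC, v, hvS, hvt⟩ := hS
        exact Finset.mem_biUnion.mpr ⟨v, Finset.mem_filter.mpr ⟨Finset.mem_univ _, hvt⟩,
          Finset.mem_filter.mpr ⟨hSC, hvS⟩⟩
      calc TC.card ≤ ∑ v ∈ TV, (C.filter (fun S => v ∈ S)).card :=
          le_trans (Finset.card_le_card hsub) Finset.card_biUnion_le
        _ ≤ ∑ v ∈ TV, (((C.filter (fun S => v ∈ S)).card - 1) + 1) := by
            apply Finset.sum_le_sum; intro i _; omega
        _ = (∑ v ∈ TV, ((C.filter (fun S => v ∈ S)).card - 1)) + TV.card := by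
            rw [Finset.sum_add_distrib]; simp
        _ ≤ splitCost C + TV.card := by
            have : (∑ v ∈ TV, ((C.filter (fun S => v ∈ S)).card - 1)) ≤ splitCost C :=
              Finset.sum_le_sum_of_subset (Finset.subset_univ _)
            omega
    have hfin : N1.card ≤
        (N1.filter (fun a => ∃ u, Quotient.mk (ccSetoid G) u = a ∧ ¬ Untouched G C u)).card +
        (N1.filter (fun a => ¬ ∃ u, Quotient.mk (ccSetoid G) u = a ∧
          ¬ Untouched G C u)).card := by
      conv_lhs => rw [hsplit]
      exact Finset.card_union_le _ _
    omega
  · -- Part 2: every component of CC(G) has at most 3k+1 vertices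
    intro c
    set Wf : Finset V := Finset.univ.filter
      (fun v => (ccGraph G).connectedComponentMk (Quotient.mk (ccSetoid G) v) = c) with hWfdef
    obtain ⟨a0, ha0⟩ := Quot.exists_rep c
    have ha0' : (ccGraph G).connectedComponentMk a0 = c := ha0
    have hv0W : (Quotient.out a0) ∈ Wf := by
      rw [hWfdef, Finset.mem_filter]
      refine ⟨Finset.mem_univ _, ?_⟩
      rw [Quotient.out_eq]
      exact ha0'
    set SC := C.filter (fun S => ∃ v ∈ S, v ∈ Wf) with hSC
    set EW := (ESet G C).filter (fun e => ∃ v ∈ Wf, v ∈ e) with hEW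
    set EI := (ESet G C).filter (fun e => ∀ v ∈ e, v ∈ Wf) with hEI
    have hEIW : EI ⊆ EW := by
      intro e he
      rw [hEI, Finset.mem_filter] at he
      rw [hEW, Finset.mem_filter]
      exact ⟨he.1, e.out.1, he.2 _ (Sym2.out_fst_mem e), Sym2.out_fst_mem e⟩
    have hWmem : ∀ {v : V}, v ∈ Wf ↔
        (ccGraph G).connectedComponentMk (Quotient.mk (ccSetoid G) v) = c := by
      intro v
      rw [hWfdef, Finset.mem_filter]
      simp
    -- the auxiliary bipartite graph
    set Δ : SimpleGraph (↥Wf ⊕ ↥SC) := SimpleGraph.fromRel (fun x y =>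
      match x, y with
      | Sum.inl u, Sum.inl v => s(u.1, v.1) ∈ ESet G C
      | Sum.inl u, Sum.inr S => u.1 ∈ S.1
      | Sum.inr S, Sum.inl u => u.1 ∈ S.1
      | Sum.inr _, Sum.inr _ => False) with hΔ
    have hstep : ∀ (u v : V) (hu : u ∈ Wf) (hv : v ∈ Wf), G.Adj u v →
        Δ.Reachable (Sum.inl ⟨u, hu⟩) (Sum.inl ⟨v, hv⟩) := by
      intro u v hu hv hadj
      by_cases he : s(u, v) ∈ ESet G C
      · refine SimpleGraph.Adj.reachable ?_
        rw [hΔ, SimpleGraph.fromRel_adj]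
        refine ⟨by simp [Subtype.ext_iff, hadj.ne], Or.inl he⟩
      · have hH := (adj_iff_of_not_edited he).mp hadj
        obtain ⟨hne, S, hS, h1, h2⟩ := adj_clusterGraphOf.mp hH
        have hSmem : S ∈ SC := by
          rw [hSC, Finset.mem_filter]
          exact ⟨hS, u, h1, hu⟩
        have r1 : Δ.Adj (Sum.inl ⟨u, hu⟩) (Sum.inr ⟨S, hSmem⟩) := by
          rw [hΔ, SimpleGraph.fromRel_adj]
          exact ⟨by simp, Or.inl h1⟩
        have r2 : Δ.Adj (Sum.inr ⟨S, hSmem⟩) (Sum.inl ⟨v, hv⟩) := by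
          rw [hΔ, SimpleGraph.fromRel_adj]
          exact ⟨by simp, Or.inl h2⟩
        exact r1.reachable.trans r2.reachable
    have hreach : ∀ (u v : V), Relation.ReflTransGen G.Adj u v →
        ∀ (hu : u ∈ Wf) (hv : v ∈ Wf),
        Δ.Reachable (Sum.inl ⟨u, hu⟩) (Sum.inl ⟨v, hv⟩) := by
      intro u v hrtg
      induction hrtg with
      | refl => intro hu hv; exact SimpleGraph.Reachable.refl _
      | tail h1 hadj ih =>
        intro hu hv
        have hb : _ ∈ Wf := hWmem.mpr ((compMk_eq_of_adj hadj).trans (hWmem.mp hv))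
        exact (ih hu hb).trans (hstep _ _ hb hv hadj)
    have hconn : Δ.Connected := by
      rw [SimpleGraph.connected_iff]
      have hbase : ∀ x : ↥Wf ⊕ ↥SC, Δ.Reachable x (Sum.inl ⟨Quotient.out a0, hv0W⟩) := by
        rintro (⟨u, hu⟩ | ⟨S, hSmem⟩)
        · refine hreach u _ ?_ hu hv0W
          exact rtg_of_comp_eq ((hWmem.mp hu).trans (hWmem.mp hv0W).symm)
        · obtain ⟨v, hvS, hvW⟩ := (Finset.mem_filter.mp hSmem).2
          have r : Δ.Adj (Sum.inr ⟨S, hSmem⟩) (Sum.inl ⟨v, hvW⟩) := by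
            rw [hΔ, SimpleGraph.fromRel_adj]
            exact ⟨by simp, Or.inl hvS⟩
          refine r.reachable.trans (hreach v _ ?_ hvW hv0W)
          exact rtg_of_comp_eq ((hWmem.mp hvW).trans (hWmem.mp hv0W).symm)
      exact ⟨fun x y => (hbase x).trans (hbase y).symm, ⟨Sum.inl ⟨Quotient.out a0, hv0W⟩⟩⟩
    have hcard1 : Fintype.card (↥Wf ⊕ ↥SC) ≤ Δ.edgeFinset.card + 1 :=
      by convert conn_card_le_edges Δ hconn
    have hcard2 : Fintype.card (↥Wf ⊕ ↥SC) = Wf.card + SC.card := by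
      simp [Fintype.card_sum]
    -- counting the edges of Δ
    have hedge : Δ.edgeFinset.card ≤
        EI.card + ∑ v ∈ Wf, (C.filter (fun S => v ∈ S)).card := by
      have hsym : ∀ x y : ↥Wf ⊕ ↥SC,
          (match x, y with
            | Sum.inl u, Sum.inl v => Sum.inl s(u.1, v.1)
            | Sum.inl u, Sum.inr S => Sum.inr (⟨u.1, S.1⟩ : Σ _ : V, Finset V)
            | Sum.inr S, Sum.inl u => Sum.inr (⟨u.1, S.1⟩ : Σ _ : V, Finset V)
            | Sum.inr _, Sum.inr _ =>
                (Sum.inl s(Quotient.out a0, Quotient.out a0) : Sym2 V ⊕ Σ _ : V, Finset V)) =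
          (match y, x with
            | Sum.inl u, Sum.inl v => Sum.inl s(u.1, v.1)
            | Sum.inl u, Sum.inr S => Sum.inr (⟨u.1, S.1⟩ : Σ _ : V, Finset V)
            | Sum.inr S, Sum.inl u => Sum.inr (⟨u.1, S.1⟩ : Σ _ : V, Finset V)
            | Sum.inr _, Sum.inr _ => Sum.inl s(Quotient.out a0, Quotient.out a0)) := by
        rintro (u | S) (v | S') <;> simp [Sym2.eq_swap]
      set F : Sym2 (↥Wf ⊕ ↥SC) → Sym2 V ⊕ (Σ _ : V, Finset V) :=
        Sym2.lift ⟨fun x y =>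
          match x, y with
          | Sum.inl u, Sum.inl v => Sum.inl s(u.1, v.1)
          | Sum.inl u, Sum.inr S => Sum.inr ⟨u.1, S.1⟩
          | Sum.inr S, Sum.inl u => Sum.inr ⟨u.1, S.1⟩
          | Sum.inr _, Sum.inr _ => Sum.inl s(Quotient.out a0, Quotient.out a0),
          hsym⟩ with hF
      have hcardT : (EI.disjSum (Wf.sigma (fun v => C.filter (fun S => v ∈ S)))).card =
          EI.card + ∑ v ∈ Wf, (C.filter (fun S => v ∈ S)).card := by
        rw [Finset.card_disjSum, Finset.card_sigma]
      rw [← hcardT]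
      apply Finset.card_le_card_of_injOn F
      · intro e he
        induction e using Sym2.ind with
        | _ x y =>
          rw [Finset.mem_coe, SimpleGraph.mem_edgeFinset, SimpleGraph.mem_edgeSet, hΔ,
            SimpleGraph.fromRel_adj] at he
          obtain ⟨hne, hrel⟩ := he
          rcases x with u | S <;> rcases y with v | S'
          · have hE : s(u.1, v.1) ∈ ESet G C := by
              rcases hrel with h | h
              · exact h
              · rw [Sym2.eq_swap]; exact h
            have : F s(Sum.inl u, Sum.inl v) = Sum.inl s(u.1, v.1) := by
              rw [hF, Sym2.lift_mk]
            rw [this]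
            refine Finset.inl_mem_disjSum.mpr ?_
            rw [hEI, Finset.mem_filter]
            refine ⟨hE, ?_⟩
            intro w hw
            rw [Sym2.mem_iff] at hw
            rcases hw with rfl | rfl
            · exact u.2
            · exact v.2
          · have hrel' : u.1 ∈ S'.1 := by rcases hrel with h | h <;> exact h
            have : F s(Sum.inl u, Sum.inr S') = Sum.inr ⟨u.1, S'.1⟩ := by
              rw [hF, Sym2.lift_mk]
            rw [this]
            refine Finset.inr_mem_disjSum.mpr ?_
            rw [Finset.mem_sigma]
            exact ⟨u.2, Finset.mem_filter.mpr ⟨(Finset.mem_filter.mp S'.2).1, hrel'⟩⟩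
          · have hrel' : v.1 ∈ S.1 := by rcases hrel with h | h <;> exact h
            have : F s(Sum.inr S, Sum.inl v) = Sum.inr ⟨v.1, S.1⟩ := by
              rw [hF, Sym2.lift_mk]
            rw [this]
            refine Finset.inr_mem_disjSum.mpr ?_
            rw [Finset.mem_sigma]
            exact ⟨v.2, Finset.mem_filter.mpr ⟨(Finset.mem_filter.mp S.2).1, hrel'⟩⟩
          · rcases hrel with h | h <;> exact absurd h (by simp)
      · intro e he e' he' heq
        induction e using Sym2.ind with
        | _ x y =>
        induction e' using Sym2.ind with
        | _ x' y' =>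
          rw [Finset.mem_coe] at he he'
          rw [SimpleGraph.mem_edgeFinset, SimpleGraph.mem_edgeSet, hΔ,
            SimpleGraph.fromRel_adj] at he he'
          obtain ⟨hne, hrel⟩ := he
          obtain ⟨hne', hrel'⟩ := he'
          rcases x with u | S <;> rcases y with v | T <;>
            rcases x' with u' | S' <;> rcases y' with v' | T' <;>
            rw [hF, Sym2.lift_mk, Sym2.lift_mk] at heq
          · -- ll-ll
            have h2 : s(u.1, v.1) = s(u'.1, v'.1) := by simpa using heq
            rw [Sym2.eq_iff] at h2
            rcases h2 with ⟨h1, h2⟩ | ⟨h1, h2⟩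
            · rw [Subtype.ext h1, Subtype.ext h2]
            · rw [Subtype.ext h1, Subtype.ext h2]
              exact Sym2.eq_swap
          · simp at heq
          · simp at heq
          · exact absurd hrel' (by simp)
          · simp at heq
          · obtain ⟨h1, h2⟩ : u.1 = u'.1 ∧ T.1 = T'.1 := by simpa using heq
            rw [Subtype.ext h1, Subtype.ext h2]
          · obtain ⟨h1, h2⟩ : u.1 = v'.1 ∧ T.1 = S'.1 := by simpa using heq
            rw [Subtype.ext h1, Subtype.ext h2]
            exact Sym2.eq_swap
          · exact absurd hrel' (by simp)
          · simp at heq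
          · obtain ⟨h1, h2⟩ : v.1 = u'.1 ∧ S.1 = T'.1 := by simpa using heq
            rw [Subtype.ext h1, Subtype.ext h2]
            exact Sym2.eq_swap
          · obtain ⟨h1, h2⟩ : v.1 = v'.1 ∧ S.1 = S'.1 := by simpa using heq
            rw [Subtype.ext h1, Subtype.ext h2]
          · exact absurd hrel' (by simp)
          · exact absurd hrel (by simp)
          · exact absurd hrel (by simp)
          · exact absurd hrel (by simp)
          · exact absurd hrel (by simp)
      -- done
    have hsum : ∑ v ∈ Wf, (C.filter (fun S => v ∈ S)).card ≤
        Wf.card + ∑ v ∈ Wf, ((C.filter (fun S => v ∈ S)).card - 1) := by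
      calc ∑ v ∈ Wf, (C.filter (fun S => v ∈ S)).card
          ≤ ∑ v ∈ Wf, (1 + ((C.filter (fun S => v ∈ S)).card - 1)) := by
            apply Finset.sum_le_sum; intro i _; omega
        _ = Wf.card + ∑ v ∈ Wf, ((C.filter (fun S => v ∈ S)).card - 1) := by
            rw [Finset.sum_add_distrib]; simp
    have hSCcard : SC.card ≤ EI.card + (∑ v ∈ Wf, ((C.filter (fun S => v ∈ S)).card - 1)) + 1 := by
      omega
    -- now count the critical cliques in the component c
    have htouched : ((Finset.univ.filter (fun a : Quotient (ccSetoid G) =>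
        (ccGraph G).connectedComponentMk a = c)).filter
          (fun a => ∃ u, Quotient.mk (ccSetoid G) u = a ∧ ¬ Untouched G C u)).card ≤
        (Wf.filter (fun v => ¬ Untouched G C v)).card := by
      refine le_trans (Finset.card_le_card ?_)
        (Finset.card_image_le (s := Wf.filter (fun v => ¬ Untouched G C v))
          (f := Quotient.mk (ccSetoid G)))
      intro a ha
      obtain ⟨haN, u, hu, hut⟩ := Finset.mem_filter.mp ha
      have huW : u ∈ Wf := by
        rw [hWfdef, Finset.mem_filter]
        refine ⟨Finset.mem_univ _, ?_⟩
        rw [hu]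
        exact (Finset.mem_filter.mp haN).2
      exact Finset.mem_image.mpr ⟨u, Finset.mem_filter.mpr ⟨huW, hut⟩, hu⟩
    have huntouched : ((Finset.univ.filter (fun a : Quotient (ccSetoid G) =>
        (ccGraph G).connectedComponentMk a = c)).filter
          (fun a => ¬ ∃ u, Quotient.mk (ccSetoid G) u = a ∧ ¬ Untouched G C u)).card ≤
        SC.card := by
      apply Finset.card_le_card_of_injOn (fun a => cluOf C (Quotient.out a))
      · intro a ha
        obtain ⟨haN, haU⟩ := Finset.mem_filter.mp ha
        push_neg at haU
        have houW : Quotient.out a ∈ Wf := by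
          rw [hWfdef, Finset.mem_filter]
          refine ⟨Finset.mem_univ _, ?_⟩
          rw [Quotient.out_eq]
          exact (Finset.mem_filter.mp haN).2
        rw [hSC, Finset.mem_coe, Finset.mem_filter]
        exact ⟨(cluOf_mem hcov _).1, Quotient.out a, (cluOf_mem hcov _).2, houW⟩
      · intro a ha a' ha' heq
        have haU := (Finset.mem_filter.mp ha).2
        have haU' := (Finset.mem_filter.mp ha').2
        push_neg at haU haU'
        have := mk_eq_of_cluOf_eq hcov (haU _ (Quotient.out_eq a))
          (haU' _ (Quotient.out_eq a')) heq
        rwa [Quotient.out_eq, Quotient.out_eq] at this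
    have htouchedV : (Wf.filter (fun v => ¬ Untouched G C v)).card ≤
        (∑ v ∈ Wf, ((C.filter (fun S => v ∈ S)).card - 1)) + 2 * EW.card := by
      refine touched_card Wf EW ?_
      intro e he hv
      rw [hEW, Finset.mem_filter]
      exact ⟨he, hv⟩
    have hsplitA : (Finset.univ.filter (fun a : Quotient (ccSetoid G) =>
        (ccGraph G).connectedComponentMk a = c)).card ≤
        ((Finset.univ.filter (fun a : Quotient (ccSetoid G) =>
          (ccGraph G).connectedComponentMk a = c)).filter
            (fun a => ∃ u, Quotient.mk (ccSetoid G) u = a ∧ ¬ Untouched G C u)).card +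
        ((Finset.univ.filter (fun a : Quotient (ccSetoid G) =>
          (ccGraph G).connectedComponentMk a = c)).filter
            (fun a => ¬ ∃ u, Quotient.mk (ccSetoid G) u = a ∧ ¬ Untouched G C u)).card := by
      conv_lhs => rw [← Finset.filter_union_filter_not_eq
        (fun a => ∃ u, Quotient.mk (ccSetoid G) u = a ∧ ¬ Untouched G C u)
        (Finset.univ.filter (fun a : Quotient (ccSetoid G) =>
          (ccGraph G).connectedComponentMk a = c))]
      exact Finset.card_union_le _ _
    have hsWle : (∑ v ∈ Wf, ((C.filter (fun S => v ∈ S)).card - 1)) ≤ splitCost C := by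
      rw [splitCost]
      exact Finset.sum_le_sum_of_subset (Finset.subset_univ _)
    have hEWle : EW.card ≤ (ESet G C).card := by
      rw [hEW]; exact Finset.card_filter_le _ _
    have hEIle : EI.card ≤ EW.card := Finset.card_le_card hEIW
    omega
  · -- Part 3: at most k non-trivial connected components
    set NT := Finset.univ.filter (fun c : (ccGraph G).ConnectedComponent =>
      ∃ a b, (ccGraph G).connectedComponentMk a = c ∧ (ccGraph G).Adj a b) with hNT
    rcases Finset.eq_empty_or_nonempty NT with hNTe | ⟨c0, hc0⟩
    · rw [hNTe]; simp
    have hVne : Nonempty V := by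
      obtain ⟨-, a, -⟩ := Finset.mem_filter.mp hc0
      exact ⟨Quotient.out a⟩
    have claim : ∀ c ∈ NT,
        (∃ e ∈ ESet G C, ∀ v ∈ e,
          (ccGraph G).connectedComponentMk (Quotient.mk (ccSetoid G) v) = c) ∨
        (∃ v : V, ¬ (C.filter (fun S => v ∈ S)).card ≤ 1 ∧
          (ccGraph G).connectedComponentMk (Quotient.mk (ccSetoid G) v) = c) := by
      intro c hc
      by_contra hcon
      push_neg at hcon
      obtain ⟨hA, hB⟩ := hcon
      have hsplitv : ∀ v : V, (ccGraph G).connectedComponentMk (Quotient.mk (ccSetoid G) v) = c →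
          (C.filter (fun S => v ∈ S)).card ≤ 1 := by
        intro v hv
        by_contra hcard
        exact (hB v (by omega)) hv
      have hedge : ∀ u v : V,
          (ccGraph G).connectedComponentMk (Quotient.mk (ccSetoid G) u) = c →
          (ccGraph G).connectedComponentMk (Quotient.mk (ccSetoid G) v) = c →
          s(u, v) ∉ ESet G C := by
        intro u v hu hv hmem
        obtain ⟨w, hw, hwc⟩ := hA _ hmem
        rw [Sym2.mem_iff] at hw
        rcases hw with rfl | rfl
        · exact hwc hu
        · exact hwc hv
      have hclu : ∀ u v : V,
          (ccGraph G).connectedComponentMk (Quotient.mk (ccSetoid G) u) = c →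
          (ccGraph G).connectedComponentMk (Quotient.mk (ccSetoid G) v) = c →
          G.Adj u v → cluOf C u = cluOf C v := by
        intro u v hu hv hadj
        have hH := (adj_iff_of_not_edited (hedge u v hu hv)).mp hadj
        obtain ⟨-, S, hS, h1, h2⟩ := adj_clusterGraphOf.mp hH
        rw [← cluOf_unique (hsplitv u hu) hS h1, ← cluOf_unique (hsplitv v hv) hS h2]
      have hclu2 : ∀ u v : V,
          (ccGraph G).connectedComponentMk (Quotient.mk (ccSetoid G) u) = c →
          (ccGraph G).connectedComponentMk (Quotient.mk (ccSetoid G) v) = c →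
          cluOf C u = cluOf C v := by
        intro u v hu hv
        have hrtg : Relation.ReflTransGen G.Adj u v := rtg_of_comp_eq (hu.trans hv.symm)
        have haux : ∀ v' : V, Relation.ReflTransGen G.Adj u v' →
            (ccGraph G).connectedComponentMk (Quotient.mk (ccSetoid G) v') = c →
            cluOf C u = cluOf C v' := by
          intro v' hr
          induction hr with
          | refl => intro _; rfl
          | tail h1 hadj ih =>
            intro hv'
            have hmid := (compMk_eq_of_adj hadj).trans hv'
            exact (ih hmid).trans (hclu _ _ hmid hv' hadj)
        exact haux v hrtg hv
      have hnbhd : ∀ u : V,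
          (ccGraph G).connectedComponentMk (Quotient.mk (ccSetoid G) u) = c →
          (insert u (G.neighborSet u) : Set V) =
            {w | w ∈ cluOf C u ∧
              (ccGraph G).connectedComponentMk (Quotient.mk (ccSetoid G) w) = c} := by
        intro u hu
        ext w
        rw [Set.mem_insert_iff, SimpleGraph.mem_neighborSet, Set.mem_setOf_eq]
        constructor
        · rintro (rfl | hadj)
          · exact ⟨(cluOf_mem hcov _).2, hu⟩
          · have hw : (ccGraph G).connectedComponentMk (Quotient.mk (ccSetoid G) w) = c :=
              (compMk_eq_of_adj hadj).symm.trans hu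
            refine ⟨?_, hw⟩
            have hH := (adj_iff_of_not_edited (hedge u w hu hw)).mp hadj
            obtain ⟨-, S, hS, h1, h2⟩ := adj_clusterGraphOf.mp hH
            rw [← cluOf_unique (hsplitv u hu) hS h1]
            exact h2
        · rintro ⟨hw, hwc⟩
          rcases eq_or_ne w u with rfl | hne
          · exact Or.inl rfl
          · refine Or.inr ((adj_iff_of_not_edited (hedge u w hu hwc)).mpr ?_)
            exact adj_clusterGraphOf.mpr ⟨hne.symm, cluOf C u, (cluOf_mem hcov u).1,
              (cluOf_mem hcov u).2, hw⟩
      obtain ⟨-, a, b, hac, hab⟩ := Finset.mem_filter.mp hc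
      obtain ⟨hne, u, v, hu, hv, hadj⟩ := ccAdj_iff.mp hab
      have hbc : (ccGraph G).connectedComponentMk b = c := by
        rw [← hac]
        exact (SimpleGraph.ConnectedComponent.sound hab.reachable).symm
      have huc : (ccGraph G).connectedComponentMk (Quotient.mk (ccSetoid G) u) = c := by
        rw [hu]; exact hac
      have hvc : (ccGraph G).connectedComponentMk (Quotient.mk (ccSetoid G) v) = c := by
        rw [hv]; exact hbc
      have : Quotient.mk (ccSetoid G) u = Quotient.mk (ccSetoid G) v := by
        apply Quotient.sound
        show insert u (G.neighborSet u) = insert v (G.neighborSet v)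
        rw [hnbhd u huc, hnbhd v hvc, hclu2 u v huc hvc]
      rw [hu, hv] at this
      exact hne this
    set SV := Finset.univ.filter (fun v : V => ¬ (C.filter (fun S => v ∈ S)).card ≤ 1) with hSV
    have hSVcard : SV.card ≤ splitCost C := by
      calc SV.card = ∑ _v ∈ SV, 1 := by simp
        _ ≤ ∑ v ∈ SV, ((C.filter (fun S => v ∈ S)).card - 1) := by
            apply Finset.sum_le_sum
            intro i hi
            have := (Finset.mem_filter.mp hi).2
            omega
        _ ≤ splitCost C := by
            rw [splitCost]
            exact Finset.sum_le_sum_of_subset (Finset.subset_univ _)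
    haveI := Classical.inhabited_of_nonempty hVne
    have hNTcard : NT.card ≤ ((ESet G C).disjSum SV).card := by
      apply Finset.card_le_card_of_injOn (fun c =>
        if h1 : ∃ e ∈ ESet G C, ∀ v ∈ e,
            (ccGraph G).connectedComponentMk (Quotient.mk (ccSetoid G) v) = c then
          Sum.inl h1.choose
        else if h2 : ∃ v : V, ¬ (C.filter (fun S => v ∈ S)).card ≤ 1 ∧
            (ccGraph G).connectedComponentMk (Quotient.mk (ccSetoid G) v) = c then
          Sum.inr h2.choose
        else Sum.inr default)
      · intro c hc
        rcases claim c hc with h1 | h2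
        · simp only [dif_pos h1]
          exact Finset.inl_mem_disjSum.mpr h1.choose_spec.1
        · by_cases h1 : ∃ e ∈ ESet G C, ∀ v ∈ e,
              (ccGraph G).connectedComponentMk (Quotient.mk (ccSetoid G) v) = c
          · simp only [dif_pos h1]
            exact Finset.inl_mem_disjSum.mpr h1.choose_spec.1
          · simp only [dif_neg h1, dif_pos h2]
            refine Finset.inr_mem_disjSum.mpr ?_
            rw [hSV, Finset.mem_filter]
            exact ⟨Finset.mem_univ _, h2.choose_spec.1⟩
      · intro c hc c' hc' heq
        by_cases h1 : ∃ e ∈ ESet G C, ∀ v ∈ e,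
            (ccGraph G).connectedComponentMk (Quotient.mk (ccSetoid G) v) = c
        · by_cases h1' : ∃ e ∈ ESet G C, ∀ v ∈ e,
              (ccGraph G).connectedComponentMk (Quotient.mk (ccSetoid G) v) = c'
          · simp only [dif_pos h1, dif_pos h1'] at heq
            have he : h1.choose = h1'.choose := by simpa using heq
            have m1 := h1.choose_spec.2 _ (Sym2.out_fst_mem h1.choose)
            have m2 := h1'.choose_spec.2 _ (Sym2.out_fst_mem h1'.choose)
            rw [he] at m1
            exact m1.symm.trans m2
          · exfalso
            simp only [dif_pos h1, dif_neg h1'] at heq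
            rcases claim c' hc' with hx | hx
            · exact h1' hx
            · simp only [dif_pos hx] at heq
              exact Sum.inl_ne_inr heq
        · rcases claim c hc with hx | h2
          · exact absurd hx h1
          by_cases h1' : ∃ e ∈ ESet G C, ∀ v ∈ e,
              (ccGraph G).connectedComponentMk (Quotient.mk (ccSetoid G) v) = c'
          · exfalso
            simp only [dif_neg h1, dif_pos h2, dif_pos h1'] at heq
            exact Sum.inr_ne_inl heq
          · rcases claim c' hc' with hx | h2'
            · exact absurd hx h1'
            simp only [dif_neg h1, dif_pos h2, dif_neg h1', dif_pos h2'] at heq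
            have he : h2.choose = h2'.choose := by simpa using heq
            have m1 := h2.choose_spec.2
            have m2 := h2'.choose_spec.2
            rw [he] at m1
            exact m1.symm.trans m2
    rw [Finset.card_disjSum] at hNTcard
    omega
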